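/- The Fenchel conjugate of the latent group lasso penalty Ω^G_p is the indicator function of the set K = { u ∈ ℝ^d : ‖P_r u‖_q ≤ 1 for all r = 1,...,B }, where q is the conjugate exponent of p (1/p + 1/q = 1). That is, (Ω^G_p)*(u) = 0 if u ∈ K and +∞ otherwise. -/

import Mathlib

open scoped Classical ENNReal NNReal

noncomputable def pNormOn (p : ℝ≥0∞) [Fact (1 ≤ p)] {ι : Type*} [Fintype ι] (v : ι → ℝ) : ℝ :=
  ‖(WithLp.equiv p (ι → ℝ)).symm v‖

noncomputable def grpNorm {d : ℕ} (p : ℝ≥0∞) [Fact (1 ≤ p)] (G : Finset (Fin d))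
    (x : Fin d → ℝ) : ℝ :=
  pNormOn p (fun j : {j : Fin d // j ∈ G} => x j.1)

def embed {d : ℕ} (G : Finset (Fin d)) (v : {j : Fin d // j ∈ G} → ℝ) : Fin d → ℝ :=
  fun j => if h : j ∈ G then v ⟨j, h⟩ else 0

noncomputable def Omega {d B : ℕ} (p : ℝ≥0∞) [Fact (1 ≤ p)] (G : Fin B → Finset (Fin d))
    (x : Fin d → ℝ) : ℝ :=
  sInf { s | ∃ v : (r : Fin B) → {j : Fin d // j ∈ G r} → ℝ,
    (∑ r, embed (G r) (v r)) = x ∧ s = ∑ r, pNormOn p (v r) }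

noncomputable def nrm2 {d : ℕ} (x : Fin d → ℝ) : ℝ := Real.sqrt (∑ j, (x j) ^ 2)

/-! ### Auxiliary lemmas -/

lemma pNormOn_nonneg (p : ℝ≥0∞) [Fact (1 ≤ p)] {ι : Type*} [Fintype ι] (v : ι → ℝ) :
    0 ≤ pNormOn p v := norm_nonneg _

lemma pNormOn_zero (p : ℝ≥0∞) [Fact (1 ≤ p)] {ι : Type*} [Fintype ι] :
    pNormOn p (0 : ι → ℝ) = 0 := by simp [pNormOn]

lemma pNormOn_smul (p : ℝ≥0∞) [Fact (1 ≤ p)] {ι : Type*} [Fintype ι] (t : ℝ) (v : ι → ℝ) :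
    pNormOn p (t • v) = |t| * pNormOn p v := by
  simp [pNormOn, norm_smul, Real.norm_eq_abs]

lemma pNormOn_eq_sum {p : ℝ≥0∞} [Fact (1 ≤ p)] (hp : p ≠ ⊤) {ι : Type*} [Fintype ι] (v : ι → ℝ) :
    pNormOn p v = (∑ j, |v j| ^ p.toReal) ^ (1 / p.toReal) := by
  have h0 : p ≠ 0 := (lt_of_lt_of_le zero_lt_one (Fact.out : 1 ≤ p)).ne'
  rw [pNormOn, PiLp.norm_eq_sum (p.toReal_pos h0 hp)]
  simp [Real.norm_eq_abs]

lemma pNormOn_one {ι : Type*} [Fintype ι] [Fact (1 ≤ (1 : ℝ≥0∞))] (v : ι → ℝ) :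
    pNormOn 1 v = ∑ j, |v j| := by
  rw [pNormOn_eq_sum (by simp)]; simp

lemma pNormOn_top {ι : Type*} [Fintype ι] [Fact (1 ≤ (⊤ : ℝ≥0∞))] (v : ι → ℝ) :
    pNormOn ⊤ v = ‖v‖ := by simp [pNormOn]

lemma conj_toReal {p q : ℝ≥0∞} (hpq : p.HolderConjugate q) (hp : p ≠ ⊤) (hq : q ≠ ⊤) :
    p.toReal.HolderConjugate q.toReal := by
  have h0p : p ≠ 0 := (ENNReal.HolderConjugate.ne_zero p q)
  have h0q : q ≠ 0 := (ENNReal.HolderConjugate.ne_zero q p)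
  have h1p : 1 < p := by
    by_contra h
    push_neg at h
    have : p = 1 := le_antisymm h (ENNReal.HolderConjugate.one_le p q)
    rw [this] at hpq
    have h2 := (@ENNReal.HolderConjugate.inv_add_inv_eq_one _ _ hpq)
    simp at h2
    have : q⁻¹ = 0 := by
      by_contra hne
      have : (1:ℝ≥0∞) < 1 + q⁻¹ :=
        ENNReal.lt_add_right ENNReal.one_ne_top hne
      rw [h2] at this
      simp at this
    exact hq (by simpa using this)
  refine Real.holderConjugate_iff.mpr ⟨?_, ?_⟩
  · exact (ENNReal.toReal_lt_toReal ENNReal.one_ne_top hp).mpr h1p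
  · have := (@ENNReal.HolderConjugate.inv_add_inv_eq_one _ _ hpq)
    have h := congrArg ENNReal.toReal this
    rw [ENNReal.toReal_add (by simp [h0p]) (by simp [h0q])] at h
    simpa [ENNReal.toReal_inv] using h

lemma holder_aux {p q : ℝ≥0∞} [Fact (1 ≤ p)] [Fact (1 ≤ q)]
    (hpq : p.HolderConjugate q) {ι : Type*} [Fintype ι] (v u : ι → ℝ) :
    ∑ j, v j * u j ≤ pNormOn p v * pNormOn q u := by
  by_cases hp : p = ⊤
  · subst hp
    have hq : q = 1 := by
      have := (@ENNReal.HolderConjugate.inv_add_inv_eq_one _ _ hpq); simp at this; simpa using congrArg (·⁻¹) this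
    subst hq
    calc ∑ j, v j * u j ≤ ∑ j, ‖v‖ * |u j| := by
          refine Finset.sum_le_sum fun j _ => ?_
          calc v j * u j ≤ |v j * u j| := le_abs_self _
            _ = |v j| * |u j| := abs_mul _ _
            _ ≤ ‖v‖ * |u j| := by
                have := norm_le_pi_norm v j
                exact mul_le_mul_of_nonneg_right (by simpa [Real.norm_eq_abs] using this)
                  (abs_nonneg _)
      _ = ‖v‖ * ∑ j, |u j| := by rw [Finset.mul_sum]
      _ = pNormOn ⊤ v * pNormOn 1 u := by rw [pNormOn_top, pNormOn_one]
  · by_cases hq : q = ⊤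
    · subst hq
      have hp1 : p = 1 := by
        have := (@ENNReal.HolderConjugate.inv_add_inv_eq_one _ _ hpq); simp at this; simpa using congrArg (·⁻¹) this
      subst hp1
      calc ∑ j, v j * u j ≤ ∑ j, |v j| * ‖u‖ := by
            refine Finset.sum_le_sum fun j _ => ?_
            calc v j * u j ≤ |v j * u j| := le_abs_self _
              _ = |v j| * |u j| := abs_mul _ _
              _ ≤ |v j| * ‖u‖ := by
                  have := norm_le_pi_norm u j
                  exact mul_le_mul_of_nonneg_left (by simpa [Real.norm_eq_abs] using this)
                    (abs_nonneg _)
        _ = (∑ j, |v j|) * ‖u‖ := by rw [← Finset.sum_mul]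
        _ = pNormOn 1 v * pNormOn ⊤ u := by rw [pNormOn_top, pNormOn_one]
    · have hc := conj_toReal hpq hp hq
      rw [pNormOn_eq_sum hp, pNormOn_eq_sum hq]
      exact Real.inner_le_Lp_mul_Lq Finset.univ v u hc

lemma exists_dual (p q : ℝ≥0∞) [Fact (1 ≤ p)] [Fact (1 ≤ q)]
    (hpq : p.HolderConjugate q) (hq : q ≠ ⊤) {ι : Type*} [Fintype ι] (u : ι → ℝ) :
    ∃ w : ι → ℝ, pNormOn p w ≤ 1 ∧ ∑ j, w j * u j = pNormOn q u := by
  by_cases hu : u = 0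
  · refine ⟨0, ?_, ?_⟩ <;> simp [pNormOn, hu]
  -- now u ≠ 0
  have hq0 : q ≠ 0 := (ENNReal.HolderConjugate.ne_zero q p)
  set q' := q.toReal with hq'def
  have hq'1 : 1 ≤ q' := by
    have : (1:ℝ≥0∞) ≤ q := Fact.out
    calc (1:ℝ) = ENNReal.toReal 1 := by simp
      _ ≤ q' := ENNReal.toReal_mono hq this
  have hq'0 : 0 < q' := lt_of_lt_of_le zero_lt_one hq'1
  set c := pNormOn q u with hcdef
  have hsum : c = (∑ j, |u j| ^ q') ^ (1 / q') := pNormOn_eq_sum hq u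
  have hcpos : 0 < c := by
    have : 0 ≤ c := pNormOn_nonneg q u
    rcases this.lt_or_eq with h | h
    · exact h
    · exfalso
      apply hu
      have : ‖(WithLp.equiv q (ι → ℝ)).symm u‖ = 0 := h.symm
      have := norm_eq_zero.mp this
      simpa using congrArg (WithLp.equiv q (ι → ℝ)) this
  have hcq : c ^ q' = ∑ j, |u j| ^ q' := by
    rw [hsum, one_div, Real.rpow_inv_rpow (Finset.sum_nonneg fun j _ =>
      Real.rpow_nonneg (abs_nonneg _) _) hq'0.ne']
  set sgn : ι → ℝ := fun j => if u j = 0 then 0 else u j / |u j| with hsgn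
  have hsgn_mul : ∀ j, sgn j * u j = |u j| := by
    intro j
    by_cases h : u j = 0
    · simp [hsgn, h]
    · simp only [hsgn, if_neg h]
      rw [div_mul_eq_mul_div, ← abs_mul_abs_self (u j), mul_comm (|u j|)]
      field_simp
  have hsgn_abs : ∀ j, |sgn j| = if u j = 0 then 0 else 1 := by
    intro j
    by_cases h : u j = 0
    · simp [hsgn, h]
    · simp only [hsgn, if_neg h, abs_div, abs_abs]
      rw [div_self (abs_ne_zero.mpr h)]
  by_cases hp : p = ⊤
  · subst hp
    have hq1 : q = 1 := by
      have := (@ENNReal.HolderConjugate.inv_add_inv_eq_one _ _ hpq); simp at this; simpa using congrArg (·⁻¹) this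
    refine ⟨sgn, ?_, ?_⟩
    · rw [pNormOn_top]
      refine (pi_norm_le_iff_of_nonneg zero_le_one).mpr fun j => ?_
      rw [Real.norm_eq_abs, hsgn_abs]
      split <;> norm_num
    · rw [hcdef]
      subst hq1
      rw [pNormOn_one]
      exact Finset.sum_congr rfl fun j _ => hsgn_mul j
  · have hc := conj_toReal hpq hp hq
    set p' := p.toReal with hp'def
    have hp'0 : 0 < p' := hc.pos
    have hkey : (q' - 1) * p' = q' := hc.symm.sub_one_mul_conj
    have hq'gt1 : 1 < q' := hc.symm.lt
    refine ⟨fun j => sgn j * |u j| ^ (q' - 1) / c ^ (q' - 1), le_of_eq ?_, ?_⟩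
    · rw [pNormOn_eq_sum hp]
      have habs : ∀ j, |sgn j * |u j| ^ (q' - 1) / c ^ (q' - 1)|
          = |u j| ^ (q' - 1) / c ^ (q' - 1) := by
        intro j
        rw [abs_div, abs_mul, hsgn_abs]
        by_cases h : u j = 0
        · simp [h, Real.zero_rpow (by linarith : q' - 1 ≠ 0)]
        · rw [if_neg h, one_mul, abs_of_nonneg (Real.rpow_nonneg (abs_nonneg _) _),
            abs_of_nonneg (Real.rpow_nonneg hcpos.le _)]
      calc (∑ j, |sgn j * |u j| ^ (q' - 1) / c ^ (q' - 1)| ^ p') ^ (1 / p')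
          = (∑ j, |u j| ^ q' / c ^ q') ^ (1 / p') := by
            congr 1
            refine Finset.sum_congr rfl fun j _ => ?_
            rw [habs j, Real.div_rpow (Real.rpow_nonneg (abs_nonneg _) _)
              (Real.rpow_nonneg hcpos.le _), ← Real.rpow_mul (abs_nonneg _),
              ← Real.rpow_mul hcpos.le, hkey]
        _ = 1 := by
            rw [← Finset.sum_div, ← hcq, div_self (Real.rpow_pos_of_pos hcpos _).ne',
              Real.one_rpow]
    · have hterm : ∀ j, sgn j * |u j| ^ (q' - 1) / c ^ (q' - 1) * u j
          = |u j| ^ q' / c ^ (q' - 1) := by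
        intro j
        rw [div_mul_eq_mul_div, mul_right_comm, hsgn_mul]
        congr 1
        by_cases h : u j = 0
        · rw [h, abs_zero, Real.zero_rpow (by linarith : q' - 1 ≠ 0),
            Real.zero_rpow hq'0.ne', mul_zero]
        · have hpos : 0 < |u j| := abs_pos.mpr h
          have h2 : |u j| ^ q' = |u j| * |u j| ^ (q' - 1) := by
            conv_lhs => rw [show q' = 1 + (q' - 1) by ring]
            rw [Real.rpow_add hpos, Real.rpow_one]
          rw [h2]
      calc ∑ j, sgn j * |u j| ^ (q' - 1) / c ^ (q' - 1) * u j
          = ∑ j, |u j| ^ q' / c ^ (q' - 1) := Finset.sum_congr rfl fun j _ => hterm j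
        _ = (∑ j, |u j| ^ q') / c ^ (q' - 1) := by rw [← Finset.sum_div]
        _ = c ^ q' / c ^ (q' - 1) := by rw [hcq]
        _ = c := by
            rw [← Real.rpow_sub hcpos, show q' - (q' - 1) = 1 by ring, Real.rpow_one]

lemma embed_zero {d : ℕ} (G : Finset (Fin d)) :
    embed G (0 : {j : Fin d // j ∈ G} → ℝ) = 0 := by
  funext j; simp [embed]

lemma sum_embed_mul {d : ℕ} (G : Finset (Fin d)) (v : {j : Fin d // j ∈ G} → ℝ)
    (u : Fin d → ℝ) :
    ∑ j, embed G v j * u j = ∑ j : {j : Fin d // j ∈ G}, v j * u j.1 := by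
  have h1 : ∑ j : Fin d, embed G v j * u j = ∑ j ∈ G, embed G v j * u j := by
    refine (Finset.sum_subset (Finset.subset_univ G) ?_).symm
    intro j _ hj
    simp [embed, hj]
  rw [h1, ← Finset.sum_attach G (fun j => embed G v j * u j), Finset.univ_eq_attach]
  refine Finset.sum_congr rfl fun j _ => ?_
  simp [embed, j.2]

lemma Omega_set_nonempty {d B : ℕ} (p : ℝ≥0∞) [Fact (1 ≤ p)] (G : Fin B → Finset (Fin d))
    (hcover : ∀ j : Fin d, ∃ r, j ∈ G r) (x : Fin d → ℝ) :
    { s | ∃ v : (r : Fin B) → {j : Fin d // j ∈ G r} → ℝ,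
      (∑ r, embed (G r) (v r)) = x ∧ s = ∑ r, pNormOn p (v r) }.Nonempty := by
  choose ρ hρ using hcover
  refine ⟨_, fun r => fun j : {j : Fin d // j ∈ G r} => if ρ j.1 = r then x j.1 else 0, ?_, rfl⟩
  funext j
  rw [Finset.sum_apply]
  rw [Finset.sum_eq_single (ρ j)]
  · simp [embed, hρ j]
  · intro r _ hr
    simp only [embed]
    split
    · rw [if_neg (fun h => hr h.symm)]
    · rfl
  · intro h; exact absurd (Finset.mem_univ _) h

lemma Omega_set_bddBelow {d B : ℕ} (p : ℝ≥0∞) [Fact (1 ≤ p)] (G : Fin B → Finset (Fin d))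
    (x : Fin d → ℝ) :
    BddBelow { s | ∃ v : (r : Fin B) → {j : Fin d // j ∈ G r} → ℝ,
      (∑ r, embed (G r) (v r)) = x ∧ s = ∑ r, pNormOn p (v r) } := by
  refine ⟨0, ?_⟩
  rintro s ⟨v, -, rfl⟩
  exact Finset.sum_nonneg fun r _ => pNormOn_nonneg _ _

lemma Omega_zero {d B : ℕ} (p : ℝ≥0∞) [Fact (1 ≤ p)] (G : Fin B → Finset (Fin d))
    (hcover : ∀ j : Fin d, ∃ r, j ∈ G r) :
    Omega p G (0 : Fin d → ℝ) = 0 := by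
  apply le_antisymm
  · apply csInf_le (Omega_set_bddBelow p G 0)
    exact ⟨fun r => 0, by simp [embed_zero], by simp [pNormOn_zero]⟩
  · apply le_csInf (Omega_set_nonempty p G hcover 0)
    rintro s ⟨v, -, rfl⟩
    exact Finset.sum_nonneg fun r _ => pNormOn_nonneg _ _

/-- The Fenchel conjugate of the latent group lasso penalty is the indicator function of
`K = { u : ‖P_r u‖_q ≤ 1 ∀ r }`, where `q` is the conjugate exponent of `p`. -/
theorem stmt2 (p q : ℝ≥0∞) [Fact (1 ≤ p)] [Fact (1 ≤ q)] (hp : 1 < p) (hpq : 1/p + 1/q = 1)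
    {d B : ℕ} (G : Fin B → Finset (Fin d)) (hcover : ∀ j : Fin d, ∃ r, j ∈ G r)
    (u : Fin d → ℝ) :
    (⨆ x : Fin d → ℝ, (((∑ j, x j * u j) - Omega p G x : ℝ) : EReal)) =
      if ∀ r, grpNorm q (G r) u ≤ 1 then (0 : EReal) else ⊤ := by
  have hconj : p.HolderConjugate q := ⟨by simpa [one_div] using hpq⟩
  have hqtop : q ≠ ⊤ := by
    intro h
    have h2 := (@ENNReal.HolderConjugate.inv_add_inv_eq_one _ _ hconj)
    rw [h] at h2
    simp at h2
    have : p = 1 := by simpa using congrArg (·⁻¹) h2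
    exact hp.ne' this
  by_cases hK : ∀ r, grpNorm q (G r) u ≤ 1
  · rw [if_pos hK]
    apply le_antisymm
    · apply iSup_le
      intro x
      have hx : ∑ j, x j * u j ≤ Omega p G x := by
        apply le_csInf (Omega_set_nonempty p G hcover x)
        rintro s ⟨v, hv, rfl⟩
        calc ∑ j, x j * u j = ∑ j, (∑ r, embed (G r) (v r) j) * u j := by
              refine Finset.sum_congr rfl fun j _ => ?_
              rw [← hv, Finset.sum_apply]
          _ = ∑ r, ∑ j, embed (G r) (v r) j * u j := by
              rw [Finset.sum_comm]
              exact Finset.sum_congr rfl fun j _ => Finset.sum_mul _ _ _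
          _ ≤ ∑ r, pNormOn p (v r) := by
              refine Finset.sum_le_sum fun r _ => ?_
              rw [sum_embed_mul]
              calc ∑ j : {j : Fin d // j ∈ G r}, v r j * u j.1
                  ≤ pNormOn p (v r) * pNormOn q (fun j : {j : Fin d // j ∈ G r} => u j.1) :=
                    holder_aux hconj _ _
                _ ≤ pNormOn p (v r) * 1 :=
                    mul_le_mul_of_nonneg_left (hK r) (pNormOn_nonneg _ _)
                _ = pNormOn p (v r) := mul_one _
      have h0 : ((∑ j, x j * u j) - Omega p G x : ℝ) ≤ 0 := sub_nonpos.mpr hx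
      exact_mod_cast EReal.coe_le_coe_iff.mpr h0
    · have h0 : (((∑ j, (0 : Fin d → ℝ) j * u j) - Omega p G (0 : Fin d → ℝ) : ℝ) : EReal)
          = (0 : EReal) := by
        rw [Omega_zero p G hcover]
        norm_num
      calc (0 : EReal) = _ := h0.symm
        _ ≤ _ := le_iSup (fun x : Fin d → ℝ =>
            (((∑ j, x j * u j) - Omega p G x : ℝ) : EReal)) (0 : Fin d → ℝ)
  · rw [if_neg hK]
    push_neg at hK
    obtain ⟨r₀, hr₀⟩ := hK
    set c := grpNorm q (G r₀) u with hcdef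
    obtain ⟨w, hw1, hw2⟩ := exists_dual p q hconj hqtop
      (fun j : {j : Fin d // j ∈ G r₀} => u j.1)
    rw [iSup_eq_top]
    intro b hb
    obtain ⟨M, hbM, -⟩ := EReal.exists_between_coe_real hb
    set t : ℝ := (|M| + 1) / (c - 1) with htdef
    have hc1 : (0:ℝ) < c - 1 := by linarith
    have ht0 : 0 < t := div_pos (by positivity) hc1
    refine ⟨embed (G r₀) (t • w), ?_⟩
    have hip : ∑ j, embed (G r₀) (t • w) j * u j = t * c := by
      rw [sum_embed_mul]
      calc ∑ j : {j : Fin d // j ∈ G r₀}, (t • w) j * u j.1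
          = t * ∑ j : {j : Fin d // j ∈ G r₀}, w j * u j.1 := by
            rw [Finset.mul_sum]
            exact Finset.sum_congr rfl fun j _ => by simp [mul_assoc]
        _ = t * c := by rw [hw2]; rfl
    have hOmega : Omega p G (embed (G r₀) (t • w)) ≤ t := by
      have hmem : t * pNormOn p w ∈ { s | ∃ v : (r : Fin B) → {j : Fin d // j ∈ G r} → ℝ,
          (∑ r, embed (G r) (v r)) = embed (G r₀) (t • w) ∧ s = ∑ r, pNormOn p (v r) } := by
        set v : (r : Fin B) → {j : Fin d // j ∈ G r} → ℝ :=
          fun r => fun j => if h : r = r₀ then t * w ⟨j.1, by rw [← h]; exact j.2⟩ else 0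
          with hvdef
        have hv0 : ∀ r, r ≠ r₀ → v r = 0 := fun r hr => funext fun j' => dif_neg hr
        have hvr₀ : v r₀ = t • w := by
          funext j'
          simp [hvdef]
        refine ⟨v, ?_, ?_⟩
        · funext j
          rw [Finset.sum_apply, Finset.sum_eq_single r₀]
          · rw [hvr₀]
          · intro r _ hr; rw [hv0 r hr, embed_zero]; rfl
          · intro h; exact absurd (Finset.mem_univ _) h
        · rw [Finset.sum_eq_single r₀]
          · rw [hvr₀, pNormOn_smul, abs_of_pos ht0]
          · intro r _ hr; rw [hv0 r hr, pNormOn_zero]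
          · intro h; exact absurd (Finset.mem_univ _) h
      calc Omega p G (embed (G r₀) (t • w)) ≤ t * pNormOn p w :=
            csInf_le (Omega_set_bddBelow p G _) hmem
        _ ≤ t * 1 := mul_le_mul_of_nonneg_left hw1 ht0.le
        _ = t := mul_one t
    have hval : M < (∑ j, embed (G r₀) (t • w) j * u j) - Omega p G (embed (G r₀) (t • w)) := by
      rw [hip]
      have : t * c - t = |M| + 1 := by
        rw [← mul_one t, mul_assoc, one_mul, ← mul_sub, htdef]
        field_simp
      nlinarith [abs_nonneg M, le_abs_self M]
    calc b < (M : EReal) := hbM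
      _ < _ := EReal.coe_lt_coe_iff.mpr hval
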